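/- arXiv:2310.11886 — 4 statements merged into one kernel-verified Lean document; each statement's English description precedes it below -/
import Mathlib

section
/- Let (Ω, μ) be a probability space, E and U finite sets, f : E → U, c : E → ℝ with c(e) ≥ 0 for all e, p ∈ (0,1), and (X_u)_{u∈U} mutually independent random variables, each taking values in {0,1} with μ(X_u = 1) = p. Define Ĉ = (1/p) · Σ_{e∈E} c(e) · X_{f(e)} and C = Σ_{e∈E} c(e). Then 𝔼[Ĉ] = C and Var[Ĉ] ≤ ((1 − p)/p) · C². -/
open MeasureTheory ProbabilityTheory

/-- Theorem 4.1 for TBC-N: the node-centric sampling estimator is unbiased and its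
variance is at most `((1 - p) / p) * C ^ 2`. -/
theorem stmt_3 {Ω : Type*} [MeasurableSpace Ω] (μ : Measure Ω) [IsProbabilityMeasure μ]
    {E U : Type*} [Fintype E] [Fintype U] (f : E → U)
    (c : E → ℝ) (hc : ∀ e, 0 ≤ c e)
    (p : ℝ) (hp : p ∈ Set.Ioo (0 : ℝ) 1)
    (X : U → Ω → ℝ) (hmeas : ∀ u, Measurable (X u))
    (hval : ∀ u ω, X u ω = 0 ∨ X u ω = 1)
    (hbern : ∀ u, μ {ω | X u ω = 1} = ENNReal.ofReal p)
    (hindep : iIndepFun X μ)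
    (C : ℝ) (hC : C = ∑ e, c e) :
    (∫ ω, (1 / p) * ∑ e, c e * X (f e) ω ∂μ) = C ∧
      variance (fun ω => (1 / p) * ∑ e, c e * X (f e) ω) μ ≤ ((1 - p) / p) * C ^ 2 := by
  classical
  obtain ⟨hp0, hp1⟩ := hp
  -- boundedness / membership in L²
  have hbdd : ∀ u, ∀ ω, X u ω ∈ Set.Icc (0 : ℝ) 1 := by
    intro u ω; rcases hval u ω with h | h <;> simp [h]
  have hmem : ∀ u, MemLp (X u) 2 μ := fun u =>
    memLp_of_bounded (Filter.Eventually.of_forall (hbdd u)) (hmeas u).aestronglyMeasurable 2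
  have hint : ∀ u, Integrable (X u) μ := fun u => (hmem u).integrable one_le_two
  -- indicator representation
  have hind : ∀ u, X u = Set.indicator {ω | X u ω = 1} (fun _ => (1 : ℝ)) := by
    intro u; funext ω
    rcases hval u ω with h | h
    · rw [h, Set.indicator_of_notMem]; simp [Set.mem_setOf_eq, h]
    · rw [h, Set.indicator_of_mem]; exact h
  have hms : ∀ u, MeasurableSet {ω | X u ω = 1} :=
    fun u => (hmeas u) (measurableSet_singleton 1)
  have hEX : ∀ u, ∫ ω, X u ω ∂μ = p := by
    intro u
    conv_lhs => rw [show (fun ω => X u ω) = X u from rfl, hind u]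
    rw [integral_indicator_const _ (hms u), measureReal_def, hbern u]
    simp [ENNReal.toReal_ofReal hp0.le]
  have hEX2 : ∀ u, ∫ ω, X u ω ^ 2 ∂μ = p := by
    intro u
    have : ∀ ω, X u ω ^ 2 = X u ω := by
      intro ω; rcases hval u ω with h | h <;> simp [h]
    simp_rw [this]; exact hEX u
  have hvarX : ∀ u, variance (X u) μ = p - p ^ 2 := by
    intro u
    rw [variance_eq_sub (hmem u)]
    simp only [Pi.pow_apply]
    rw [hEX2 u, hEX u]
  -- regroup sum over fibers
  set a : U → ℝ := fun u => ∑ e ∈ Finset.univ.filter (fun e => f e = u), c e with ha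
  have hgroup : ∀ ω, ∑ e, c e * X (f e) ω = ∑ u, a u * X u ω := by
    intro ω
    rw [← Finset.sum_fiberwise Finset.univ f (fun e => c e * X (f e) ω)]
    refine Finset.sum_congr rfl fun u _ => ?_
    rw [ha, Finset.sum_mul]
    refine Finset.sum_congr rfl fun e he => ?_
    rw [(Finset.mem_filter.1 he).2]
  have haC : ∑ u, a u = C := by
    rw [hC, ha, Finset.sum_fiberwise Finset.univ f c]
  have hann : ∀ u, 0 ≤ a u := fun u => Finset.sum_nonneg fun e _ => hc e
  -- expectation
  have hintsum : Integrable (fun ω => ∑ u, a u * X u ω) μ :=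
    integrable_finset_sum _ fun u _ => (hint u).const_mul _
  have hE : ∫ ω, ∑ u, a u * X u ω ∂μ = p * C := by
    rw [integral_finset_sum _ fun u _ => (hint u).const_mul _]
    have : ∀ u, ∫ ω, a u * X u ω ∂μ = a u * p := by
      intro u; rw [integral_const_mul, hEX u]
    simp_rw [this, ← Finset.sum_mul, haC, mul_comm]
  constructor
  · simp_rw [hgroup]
    rw [integral_const_mul, hE]
    field_simp
  · -- variance
    have hrw : (fun ω => (1 / p) * ∑ e, c e * X (f e) ω)
        = fun ω => (1 / p) * ∑ u, a u * X u ω := by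
      funext ω; rw [hgroup]
    rw [hrw, variance_const_mul]
    have hsum_eq : (fun ω => ∑ u, a u * X u ω) = ∑ u, (fun ω => a u * X u ω) := by
      funext ω; simp
    have hvar_sum : variance (fun ω => ∑ u, a u * X u ω) μ
        = ∑ u, variance (fun ω => a u * X u ω) μ := by
      rw [hsum_eq]
      refine IndepFun.variance_sum (fun u _ => ((hmem u).const_mul _)) ?_
      intro u _ v _ huv
      exact (hindep.indepFun huv).comp (measurable_const_mul (a u))
        (measurable_const_mul (a v))
    rw [hvar_sum]
    have : ∀ u, variance (fun ω => a u * X u ω) μ = a u ^ 2 * (p - p ^ 2) := by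
      intro u; rw [variance_const_mul, hvarX u]
    simp_rw [this, ← Finset.sum_mul]
    have hsq : ∑ u, a u ^ 2 ≤ (∑ u, a u) ^ 2 :=
      Finset.sum_sq_le_sq_sum_of_nonneg fun u _ => hann u
    rw [haC] at hsq
    have hp2 : (0:ℝ) < p - p ^ 2 := by nlinarith
    have h1 : (1 / p) ^ 2 * ((∑ u, a u ^ 2) * (p - p ^ 2))
        ≤ (1 / p) ^ 2 * (C ^ 2 * (p - p ^ 2)) := by
      have := mul_le_mul_of_nonneg_right hsq hp2.le
      exact mul_le_mul_of_nonneg_left this (by positivity)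
    refine h1.trans_eq ?_
    field_simp
end

section
/- Let (Ω, μ) be a probability space, ε, δ ∈ (0,1), E a finite index set, c : E → ℝ with c(e) ≥ 0 for all e and C = Σ_{e∈E} c(e) > 0, and let p ∈ (0,1) satisfy p ≥ 1/(1 + δε²). Let (X_e)_{e∈E} be mutually independent random variables, each taking values in {0,1} with μ(X_e = 1) = p, and define Ĉ = (1/p) · Σ_{e∈E} c(e) · X_e. Then μ( |Ĉ − C| ≥ εC ) ≤ δ, i.e., Ĉ is an (ε, δ)-approximation of C. -/
open MeasureTheory ProbabilityTheory

/-- Theorem 4.3, first part: with sampling probability `p ≥ 1/(1 + δ ε²)`, the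
edge-centric sampling estimator is an (ε, δ)-approximation of `C`. -/
theorem stmt_7 {Ω : Type*} [MeasurableSpace Ω] (μ : Measure Ω) [IsProbabilityMeasure μ]
    (ε δ : ℝ) (hε : ε ∈ Set.Ioo (0 : ℝ) 1) (hδ : δ ∈ Set.Ioo (0 : ℝ) 1)
    {E : Type*} [Fintype E] (c : E → ℝ) (hc : ∀ e, 0 ≤ c e)
    (C : ℝ) (hC : C = ∑ e, c e) (hCpos : 0 < C)
    (p : ℝ) (hp : p ∈ Set.Ioo (0 : ℝ) 1) (hplb : 1 / (1 + δ * ε ^ 2) ≤ p)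
    (X : E → Ω → ℝ) (hmeas : ∀ e, Measurable (X e))
    (hval : ∀ e ω, X e ω = 0 ∨ X e ω = 1)
    (hbern : ∀ e, μ {ω | X e ω = 1} = ENNReal.ofReal p)
    (hindep : iIndepFun X μ) :
    μ {ω | ε * C ≤ |(1 / p) * (∑ e, c e * X e ω) - C|} ≤ ENNReal.ofReal δ := by
  obtain ⟨hε0, hε1⟩ := hε
  obtain ⟨hδ0, hδ1⟩ := hδ
  obtain ⟨hp0, hp1⟩ := hp
  -- MemLp for each X e
  have hXmem : ∀ e, MemLp (X e) 2 μ := fun e =>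
    MemLp.of_bound (hmeas e).aestronglyMeasurable 1 (Filter.Eventually.of_forall fun ω => by
      rcases hval e ω with h | h <;> simp [h])
  -- expectation of X e
  have hEX : ∀ e, μ[X e] = p := by
    intro e
    have hind : X e = Set.indicator {ω | X e ω = 1} (fun _ => (1:ℝ)) := by
      funext ω
      rcases hval e ω with h | h
      · rw [h, Set.indicator_of_notMem]
        simp only [Set.mem_setOf_eq, h]
        norm_num
      · rw [h]; exact (Set.indicator_of_mem h (fun _ => (1:ℝ))).symm
    have hs : MeasurableSet {ω | X e ω = 1} := (hmeas e) (measurableSet_singleton 1)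
    rw [hind, integral_indicator_const _ hs, measureReal_def, hbern e, ENNReal.toReal_ofReal hp0.le]
    simp
  -- second moment
  have hsq : ∀ e, (X e) ^ 2 = X e := by
    intro e; funext ω
    rcases hval e ω with h | h <;> simp [h]
  have hVX : ∀ e, variance (X e) μ = p - p ^ 2 := by
    intro e
    rw [variance_eq_sub (hXmem e), hsq e, hEX e]
  -- the scaled variables
  set T : Ω → ℝ := ∑ e, (c e • X e) with hT
  have hTapp : ∀ ω, T ω = ∑ e, c e * X e ω := by
    intro ω; simp [hT]
  have hTmem : MemLp T 2 μ := memLp_finset_sum' _ fun e _ => (hXmem e).const_smul (c e)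
  have hVT : variance T μ = (∑ e, (c e) ^ 2) * (p - p ^ 2) := by
    rw [hT, IndepFun.variance_sum (fun e _ => (hXmem e).const_smul (c e))
      (fun i _ j _ hij => by
        have h := (hindep.indepFun hij).comp
          (measurable_const_mul (c i)) (measurable_const_mul (c j))
        exact h)]
    simp_rw [variance_smul, hVX, Finset.sum_mul]
  set Y : Ω → ℝ := fun ω => (1 / p) * ∑ e, c e * X e ω with hY
  have hYeq : Y = (1 / p) • T := by
    funext ω; simp [hY, hTapp, smul_eq_mul]
  have hYmem : MemLp Y 2 μ := by rw [hYeq]; exact hTmem.const_smul _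
  have hEY : μ[Y] = C := by
    rw [hYeq]
    simp only [Pi.smul_apply, smul_eq_mul]
    rw [integral_const_mul, hT]
    simp only [Finset.sum_apply]
    rw [integral_finset_sum _ (fun e _ => (((hXmem e).integrable one_le_two).smul (c e) : Integrable (c e • X e) μ))]
    simp only [Finset.sum_apply, Pi.smul_apply, smul_eq_mul, integral_const_mul, hEX]
    rw [← Finset.sum_mul, hC]
    field_simp
  have hVY : variance Y μ = (∑ e, (c e) ^ 2) * ((1 - p) / p) := by
    rw [hYeq, variance_smul, hVT]
    field_simp
  -- bounds
  have hsumsq : (∑ e, (c e) ^ 2) ≤ C ^ 2 := by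
    have h1 : ∀ e, (c e) ^ 2 ≤ c e * C := fun e => by
      have : c e ≤ C := hC ▸ Finset.single_le_sum (fun i _ => hc i) (Finset.mem_univ e)
      nlinarith [hc e]
    calc (∑ e, (c e) ^ 2) ≤ ∑ e, c e * C := Finset.sum_le_sum fun e _ => h1 e
      _ = C ^ 2 := by rw [← Finset.sum_mul, ← hC]; ring
  have hratio : (1 - p) / p ≤ δ * ε ^ 2 := by
    have h1 : 1 / p ≤ 1 + δ * ε ^ 2 := by
      rw [div_le_iff₀ hp0]
      have hpos : 0 < 1 + δ * ε ^ 2 := by positivity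
      calc (1:ℝ) = (1 / (1 + δ * ε ^ 2)) * (1 + δ * ε ^ 2) := by field_simp
        _ ≤ p * (1 + δ * ε ^ 2) := mul_le_mul_of_nonneg_right hplb hpos.le
        _ = (1 + δ * ε ^ 2) * p := by ring
    have : (1 - p) / p = 1 / p - 1 := by field_simp
    linarith
  have hsumnn : 0 ≤ ∑ e, (c e) ^ 2 := Finset.sum_nonneg fun e _ => sq_nonneg _
  have hVbound : variance Y μ ≤ δ * (ε * C) ^ 2 := by
    rw [hVY]
    calc (∑ e, (c e) ^ 2) * ((1 - p) / p) ≤ C ^ 2 * (δ * ε ^ 2) := by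
          apply mul_le_mul hsumsq hratio (div_nonneg (by linarith) hp0.le) (sq_nonneg C)
      _ = δ * (ε * C) ^ 2 := by ring
  have hcheb := meas_ge_le_variance_div_sq (μ := μ) hYmem (mul_pos hε0 hCpos)
  rw [hEY] at hcheb
  refine le_trans hcheb (ENNReal.ofReal_le_ofReal ?_)
  rw [div_le_iff₀ (by positivity)]
  linarith
end

section
/- Let (Ω, μ) be a probability space, ε, δ ∈ (0,1), E a finite set with |E| = m ≥ 1, a : E → ℝ with a(e) ≥ 0 for all e and C = Σ_{e∈E} a(e) > 0. Let s ≥ 1 be an integer with s ≥ (m − 1)/(δε²), and let Y_1, …, Y_s : Ω → E be mutually independent random variables, each uniformly distributed on E. Define Ĉ = (1/s) · Σ_{j=1}^{s} m · a(Y_j). Then μ( |Ĉ − C| ≥ εC ) ≤ δ. -/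
open MeasureTheory ProbabilityTheory

/-- Chebyshev-based sample-size bound for TBC-I (proof of Theorem 4.3): with
`s ≥ (m - 1)/(δ ε²)` uniform samples, the estimator is an (ε, δ)-approximation of `C`. -/
theorem stmt_8 {Ω : Type*} [MeasurableSpace Ω] (μ : Measure Ω) [IsProbabilityMeasure μ]
    (ε δ : ℝ) (hε : ε ∈ Set.Ioo (0 : ℝ) 1) (hδ : δ ∈ Set.Ioo (0 : ℝ) 1)
    {E : Type*} [Fintype E] [Nonempty E] [MeasurableSpace E] [MeasurableSingletonClass E]
    (m : ℕ) (hm : m = Fintype.card E)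
    (a : E → ℝ) (ha : ∀ e, 0 ≤ a e)
    (C : ℝ) (hC : C = ∑ e, a e) (hCpos : 0 < C)
    (s : ℕ) (hs : 1 ≤ s) (hslb : ((m : ℝ) - 1) / (δ * ε ^ 2) ≤ (s : ℝ))
    (Y : Fin s → Ω → E) (hmeas : ∀ j, Measurable (Y j))
    (hunif : ∀ j e, μ {ω | Y j ω = e} = (m : ENNReal)⁻¹)
    (hindep : iIndepFun Y μ) :
    μ {ω | ε * C ≤ |(1 / (s : ℝ)) * (∑ j, (m : ℝ) * a (Y j ω)) - C|}
      ≤ ENNReal.ofReal δ := by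
  obtain ⟨hε0, hε1⟩ := hε
  obtain ⟨hδ0, hδ1⟩ := hδ
  have hmpos : 0 < m := by rw [hm]; exact Fintype.card_pos
  have hm1 : (1:ℝ) ≤ m := by exact_mod_cast hmpos
  have hsR : (0:ℝ) < s := by exact_mod_cast hs
  -- the one-sample estimator
  set f : E → ℝ := fun e => (m : ℝ) * a e with hf
  set X : Fin s → Ω → ℝ := fun j ω => f (Y j ω) with hX
  -- integrals of functions of a uniform sample
  have hint : ∀ (g : E → ℝ) (j : Fin s),
      ∫ ω, g (Y j ω) ∂μ = (m : ℝ)⁻¹ * ∑ e, g e := by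
    intro g j
    have hg : Measurable g := measurable_of_countable g
    rw [← integral_map (hmeas j).aemeasurable hg.aestronglyMeasurable,
      integral_fintype (Integrable.of_finite)]
    have hmap : ∀ e : E, μ.map (Y j) {e} = (m : ENNReal)⁻¹ := by
      intro e
      rw [Measure.map_apply (hmeas j) (measurableSet_singleton e)]
      have : Y j ⁻¹' {e} = {ω | Y j ω = e} := rfl
      rw [this, hunif]
    simp only [Measure.real, hmap, smul_eq_mul]
    rw [Finset.mul_sum]
    congr 1
    ext e
    congr 1
    simp [ENNReal.toReal_inv]
  have hmne : (m:ℝ) ≠ 0 := by positivity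
  -- mean of each sample
  have hmean : ∀ j, ∫ ω, X j ω ∂μ = C := by
    intro j
    rw [hX, hint f j, hf, hC]
    rw [← Finset.mul_sum, ← mul_assoc, inv_mul_cancel₀ hmne, one_mul]
  -- each X j is Memℒp 2
  obtain ⟨e₀, he₀⟩ := Finite.exists_max (fun e => |f e|)
  have hXmeas : ∀ j, Measurable (X j) := fun j =>
    (measurable_of_countable f).comp (hmeas j)
  have hXmem : ∀ j, MemLp (X j) 2 μ := by
    intro j
    refine MemLp.of_bound (hXmeas j).aestronglyMeasurable (|f e₀|) ?_
    filter_upwards with ω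
    simpa [Real.norm_eq_abs] using he₀ (Y j ω)
  -- variance of each sample
  set v : ℝ := (m:ℝ) * ∑ e, (a e)^2 - C^2 with hv
  have hvar : ∀ j, variance (X j) μ = v := by
    intro j
    rw [variance_eq_sub (hXmem j)]
    have h2 : ∫ ω, (X j ω)^2 ∂μ = (m:ℝ) * ∑ e, (a e)^2 := by
      have := hint (fun e => (f e)^2) j
      rw [hX]
      simp only [hf] at this ⊢
      rw [this]
      rw [Finset.mul_sum]
      rw [Finset.mul_sum]
      congr 1; ext e; field_simp
    have hμX : μ[X j] = C := hmean j
    have hμX2 : μ[(X j)^2] = (m:ℝ) * ∑ e, (a e)^2 := by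
      simpa [Pi.pow_apply] using h2
    rw [hμX2, hμX, hv]
  have hvle : v ≤ ((m:ℝ) - 1) * C^2 := by
    have hsum : ∑ e, (a e)^2 ≤ C^2 := by
      rw [hC]
      exact Finset.sum_sq_le_sq_sum_of_nonneg (fun i _ => ha i)
    nlinarith
  -- sum of samples
  set S : Ω → ℝ := ∑ j, X j with hS
  have hSmem : MemLp S 2 μ := memLp_finset_sum' _ (fun j _ => hXmem j)
  have hSmean : μ[S] = (s:ℝ) * C := by
    rw [hS]
    simp only [Finset.sum_apply]
    rw [integral_finset_sum _ (fun j _ => (hXmem j).integrable one_le_two)]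
    simp [hmean, Finset.sum_const]
  have hSvar : variance S μ = (s:ℝ) * v := by
    rw [hS, IndepFun.variance_sum (fun j _ => hXmem j)]
    · simp [hvar, Finset.sum_const, mul_comm]
    · intro i _ j _ hij
      exact (hindep.comp (fun _ => f) (fun _ => measurable_of_countable f)).indepFun hij
  -- rewrite the event
  have hset : {ω | ε * C ≤ |(1 / (s : ℝ)) * (∑ j, (m : ℝ) * a (Y j ω)) - C|}
      = {ω | (s:ℝ) * ε * C ≤ |S ω - μ[S]|} := by
    ext ω
    simp only [Set.mem_setOf_eq, hSmean]
    have hSω : S ω = ∑ j, (m : ℝ) * a (Y j ω) := by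
      simp [hS, hX, hf, Finset.sum_apply]
    rw [hSω]
    set T := ∑ j, (m : ℝ) * a (Y j ω) with hT
    have h1 : (1 / (s:ℝ)) * T - C = (T - (s:ℝ) * C) / s := by field_simp
    rw [h1, abs_div, abs_of_pos hsR, le_div_iff₀ hsR]
    constructor <;> intro h <;> nlinarith
  rw [hset]
  have hcpos : 0 < (s:ℝ) * ε * C := by positivity
  refine le_trans (meas_ge_le_variance_div_sq hSmem hcpos) ?_
  apply ENNReal.ofReal_le_ofReal
  rw [hSvar, div_le_iff₀ (by positivity)]
  -- (m-1) ≤ s δ ε²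
  have hkey : (m:ℝ) - 1 ≤ (s:ℝ) * δ * ε^2 := by
    have hpos : 0 < δ * ε^2 := by positivity
    rw [div_le_iff₀ hpos] at hslb
    nlinarith
  have hm1' : (0:ℝ) ≤ (m:ℝ) - 1 := by linarith
  have h1 : (s:ℝ) * v ≤ (s:ℝ) * (((m:ℝ) - 1) * C^2) :=
    mul_le_mul_of_nonneg_left hvle hsR.le
  have h2 : ((m:ℝ) - 1) * C^2 ≤ ((s:ℝ) * δ * ε^2) * C^2 :=
    mul_le_mul_of_nonneg_right hkey (sq_nonneg C)
  nlinarith [h1, mul_le_mul_of_nonneg_left h2 hsR.le]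
end

section
/- Let (Ω, μ) be a probability space, ε, δ ∈ (0,1), E a finite set with |E| = m ≥ 2, a : E → ℝ with a(e) ≥ 0 for all e and C = Σ_{e∈E} a(e) > 0. Let s ≥ 1 be an integer with s ≥ (m − 1)·ln(2/δ) / ((1 + ε)·ln(1 + ε) − ε), and let Y_1, …, Y_s : Ω → E be mutually independent random variables, each uniformly distributed on E. Define Ĉ = (1/s) · Σ_{j=1}^{s} m · a(Y_j). Then μ( |Ĉ − C| ≥ εC ) ≤ δ. -/
open MeasureTheory ProbabilityTheory

open Real

lemma exp_sub_eq_tsum (u : ℝ) : Real.exp u - u - 1 = ∑' n : ℕ, u^(n+2)/(Nat.factorial (n+2) : ℝ) := by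
  have h0 : Real.exp u = ∑' n : ℕ, u^n / (Nat.factorial n : ℝ) := by
    rw [Real.exp_eq_exp_ℝ, NormedSpace.exp_eq_tsum_div]
  have hs : Summable (fun n : ℕ => u^n / (Nat.factorial n : ℝ)) := Real.summable_pow_div_factorial u
  have hs1 : Summable (fun n : ℕ => u^(n+1) / (Nat.factorial (n+1) : ℝ)) :=
    hs.comp_injective (add_left_injective 1)
  rw [Summable.tsum_eq_zero_add hs] at h0
  rw [Summable.tsum_eq_zero_add hs1] at h0
  simp only [pow_zero, Nat.factorial_zero, pow_one, Nat.factorial_one] at h0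
  rw [h0]
  have he : ∀ b:ℕ, u ^ (b+1+1) / (Nat.factorial (b+1+1) : ℝ)
      = u^(b+2)/(Nat.factorial (b+2) : ℝ) := fun b => rfl
  simp only [he]
  simp [Nat.factorial]
  ring

lemma phi_mono {u v : ℝ} (hu : 0 ≤ u) (huv : u ≤ v) :
    v^2 * (Real.exp u - u - 1) ≤ u^2 * (Real.exp v - v - 1) := by
  have hv : 0 ≤ v := hu.trans huv
  rw [exp_sub_eq_tsum, exp_sub_eq_tsum, ← tsum_mul_left, ← tsum_mul_left]
  have hsu : Summable (fun n : ℕ => v^2 * (u^(n+2)/(Nat.factorial (n+2) : ℝ))) :=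
    (((Real.summable_pow_div_factorial u).comp_injective
      (add_left_injective 2)).mul_left _)
  have hsv : Summable (fun n : ℕ => u^2 * (v^(n+2)/(Nat.factorial (n+2) : ℝ))) :=
    (((Real.summable_pow_div_factorial v).comp_injective
      (add_left_injective 2)).mul_left _)
  refine Summable.tsum_le_tsum (fun n => ?_) hsu hsv
  have hp : u^n ≤ v^n := pow_le_pow_left₀ hu huv n
  have h1 : v^2 * u^(n+2) ≤ u^2 * v^(n+2) := by
    have : u^(n+2) = u^2 * u^n := by ring
    rw [this]
    have : v^(n+2) = v^2 * v^n := by ring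
    rw [this]
    nlinarith [sq_nonneg u, sq_nonneg v, pow_nonneg hu n,
      mul_nonneg (mul_nonneg (sq_nonneg u) (sq_nonneg v)) (sub_nonneg.2 hp)]
  have hf : (0:ℝ) < (Nat.factorial (n+2) : ℝ) := by positivity
  rw [mul_div_assoc', mul_div_assoc']
  gcongr

lemma exp_quad_mono : Monotone (fun y : ℝ => Real.exp y - (1 + y + y^2/2)) := by
  apply monotone_of_deriv_nonneg
  · fun_prop
  · intro x
    have hd : HasDerivAt (fun y : ℝ => Real.exp y - (1 + y + y^2/2))
        (Real.exp x - (0 + 1 + 2 * x ^ 1 / 2)) x := by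
      exact (Real.hasDerivAt_exp x).sub
        (((hasDerivAt_const x (1:ℝ)).add (hasDerivAt_id x)).add
          ((hasDerivAt_pow 2 x).div_const 2))
    rw [hd.deriv]
    have := Real.add_one_le_exp x
    simp only [pow_one]
    linarith

lemma exp_le_quad {y : ℝ} (hy : y ≤ 0) : Real.exp y ≤ 1 + y + y^2/2 := by
  have := exp_quad_mono hy
  simp only [Real.exp_zero] at this
  linarith

lemma quad_le_exp {y : ℝ} (hy : 0 ≤ y) : 1 + y + y^2/2 ≤ Real.exp y := by
  have := exp_quad_mono hy
  simp only [Real.exp_zero] at this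
  linarith

lemma exp_le_bennett {x b t : ℝ} (hx : x ≤ b) (hb : 0 < b) (ht : 0 ≤ t) :
    Real.exp (t*x) ≤ 1 + t*x + x^2 * ((Real.exp (t*b) - t*b - 1)/b^2) := by
  have hb2 : (0:ℝ) < b^2 := by positivity
  rcases ht.eq_or_lt with h0 | htpos
  · subst h0; simp
  have key : b^2 * (Real.exp (t*x) - t*x - 1) ≤ x^2 * (Real.exp (t*b) - t*b - 1) := by
    rcases le_or_gt x 0 with hx0 | hx0
    · have htx : t*x ≤ 0 := mul_nonpos_of_nonneg_of_nonpos ht hx0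
      have h1 : Real.exp (t*x) - t*x - 1 ≤ (t*x)^2/2 := by
        have := exp_le_quad htx; linarith
      have h2 : (t*b)^2/2 ≤ Real.exp (t*b) - t*b - 1 := by
        have := quad_le_exp (mul_nonneg ht hb.le); linarith
      nlinarith [sq_nonneg x, sq_nonneg (t*x), sq_nonneg (t*b), sq_nonneg t,
        mul_nonneg (sq_nonneg x) (sq_nonneg t)]
    · have hM := phi_mono (mul_nonneg ht hx0.le) (mul_le_mul_of_nonneg_left hx ht)
      have ht2 : (0:ℝ) < t^2 := by positivity
      nlinarith [hM, mul_pos ht2 hb2]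
  have : Real.exp (t*x) - t*x - 1 ≤ x^2 * (Real.exp (t*b) - t*b - 1) / b^2 :=
    (le_div_iff₀ hb2).2 (by linarith [key])
  rw [mul_div_assoc] at this
  linarith

open MeasureTheory ProbabilityTheory in
set_option maxHeartbeats 1000000 in
lemma tail_bound {Ω : Type*} [MeasurableSpace Ω] (μ : MeasureTheory.Measure Ω)
    [IsProbabilityMeasure μ]
    {E : Type*} [Fintype E] [MeasurableSpace E] [MeasurableSingletonClass E]
    (m : ℕ) (hm : m = Fintype.card E) (hmpos : 0 < m)
    (s : ℕ) (Y : Fin s → Ω → E) (hmeas : ∀ j, Measurable (Y j))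
    (hunif : ∀ j e, μ {ω | Y j ω = e} = (m : ENNReal)⁻¹)
    (hindep : iIndepFun Y μ)
    (g : E → ℝ) (b : ℝ) (hb : 0 < b)
    (hgb : ∀ e, g e ≤ b) (hg0 : ∑ e, g e = 0) (v : ℝ)
    (hg2 : ∑ e, (g e)^2 ≤ (m:ℝ) * v) (hv : 0 ≤ v)
    (t : ℝ) (ht : 0 ≤ t) (A : ℝ) :
    (μ {ω | A ≤ ∑ j, g (Y j ω)}).toReal ≤
      Real.exp (-t*A + s*(v*((Real.exp (t*b)-t*b-1)/b^2))) := by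
  have hmR : (0:ℝ) < m := Nat.cast_pos.2 hmpos
  -- integral of a function of one sample
  have hI : ∀ (j : Fin s) (q : E → ℝ),
      ∫ ω, q (Y j ω) ∂μ = ∑ e, ((m:ℝ))⁻¹ * q e := by
    intro j q
    have : IsProbabilityMeasure (μ.map (Y j)) :=
      Measure.isProbabilityMeasure_map (hmeas j).aemeasurable
    rw [← MeasureTheory.integral_map (hmeas j).aemeasurable
      (measurable_of_countable q).aestronglyMeasurable,
      MeasureTheory.integral_fintype (.of_finite)]
    refine Finset.sum_congr rfl fun e _ => ?_
    have hpre : Y j ⁻¹' {e} = {ω | Y j ω = e} := by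
      ext ω; simp [Set.mem_preimage]
    rw [measureReal_def, Measure.map_apply (hmeas j) (measurableSet_singleton e), hpre, hunif j e,
      smul_eq_mul]
    congr 1
    simp [ENNReal.toReal_inv]
  set Z : Fin s → Ω → ℝ := fun j ω => g (Y j ω) with hZ
  have hZmeas : ∀ j, Measurable (Z j) := fun j =>
    (measurable_of_countable g).comp (hmeas j)
  have hZindep : iIndepFun Z μ :=
    hindep.comp (fun _ => g) (fun _ => measurable_of_countable g)
  set φ : ℝ := Real.exp (t*b) - t*b - 1 with hφ
  have hφ0 : 0 ≤ φ := by
    have := Real.add_one_le_exp (t*b); simp only [hφ]; linarith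
  -- mgf bound for each sample
  have hmgf : ∀ j, mgf (Z j) μ t ≤ Real.exp (v * (φ/b^2)) := by
    intro j
    have h1 : mgf (Z j) μ t = ∑ e, ((m:ℝ))⁻¹ * Real.exp (t * g e) := by
      rw [mgf]; exact hI j (fun e => Real.exp (t * g e))
    have h2 : ∑ e, ((m:ℝ))⁻¹ * Real.exp (t * g e) ≤
        ∑ e, ((m:ℝ))⁻¹ * (1 + t * g e + (g e)^2 * (φ/b^2)) := by
      refine Finset.sum_le_sum fun e _ => ?_
      exact mul_le_mul_of_nonneg_left (exp_le_bennett (hgb e) hb ht)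
        (by positivity)
    have h3 : ∑ e, ((m:ℝ))⁻¹ * (1 + t * g e + (g e)^2 * (φ/b^2)) ≤
        1 + v * (φ/b^2) := by
      rw [← Finset.mul_sum]
      have hsum : ∑ e, (1 + t * g e + (g e)^2 * (φ/b^2)) =
          (m:ℝ) + t * (∑ e, g e) + (∑ e, (g e)^2) * (φ/b^2) := by
        rw [Finset.sum_add_distrib, Finset.sum_add_distrib, ← Finset.mul_sum,
          ← Finset.sum_mul]
        simp [Finset.card_univ, hm]
      rw [hsum, hg0]
      have hφb : 0 ≤ φ/b^2 := by positivity
      have : (∑ e, (g e)^2) * (φ/b^2) ≤ ((m:ℝ) * v) * (φ/b^2) :=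
        mul_le_mul_of_nonneg_right hg2 hφb
      rw [inv_mul_le_iff₀ hmR]
      nlinarith [this]
    calc mgf (Z j) μ t ≤ 1 + v * (φ/b^2) := by rw [h1]; exact h2.trans h3
      _ ≤ Real.exp (v * (φ/b^2)) := by
          have := Real.add_one_le_exp (v * (φ/b^2)); linarith
  -- the sum variable
  set S : Ω → ℝ := fun ω => ∑ j, Z j ω with hS
  have hSeq : (∑ j, Z j) = S := by
    ext ω; simp [hS, Finset.sum_apply]
  have hSmeas : Measurable S := Finset.measurable_sum Finset.univ (fun j _ => hZmeas j)
  -- integrability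
  have hint : Integrable (fun ω => Real.exp (t * S ω)) μ := by
    refine Integrable.mono' (integrable_const (Real.exp (t * (s * b))))
      ((hSmeas.const_mul t).exp).aestronglyMeasurable
      (Filter.Eventually.of_forall fun ω => ?_)
    rw [Real.norm_eq_abs, abs_of_pos (Real.exp_pos _), Real.exp_le_exp]
    have hSb : S ω ≤ (s:ℝ) * b := by
      calc S ω ≤ ∑ _j : Fin s, b := Finset.sum_le_sum fun j _ => hgb _
        _ = (s:ℝ) * b := by simp [mul_comm]
    exact mul_le_mul_of_nonneg_left hSb ht
  -- Chernoff
  have hcher := measure_ge_le_exp_mul_mgf (X := S) (μ := μ) A ht hint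
  have hprod : mgf S μ t ≤ (Real.exp (v * (φ/b^2)))^(s:ℕ) := by
    rw [← hSeq, hZindep.mgf_sum hZmeas]
    calc ∏ j : Fin s, mgf (Z j) μ t ≤ ∏ _j : Fin s, Real.exp (v * (φ/b^2)) :=
          Finset.prod_le_prod (fun j _ => mgf_nonneg) (fun j _ => hmgf j)
      _ = (Real.exp (v * (φ/b^2)))^(s:ℕ) := by simp
  have hset : {ω | A ≤ ∑ j, g (Y j ω)} = {ω | A ≤ S ω} := by
    ext ω; simp [hS, hZ]
  rw [hset]
  calc (μ {ω | A ≤ S ω}).toReal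
      ≤ Real.exp (-t * A) * mgf S μ t := hcher
    _ ≤ Real.exp (-t * A) * (Real.exp (v * (φ/b^2)))^(s:ℕ) :=
        mul_le_mul_of_nonneg_left hprod (Real.exp_pos _).le
    _ = Real.exp (-t*A + s*(v*(φ/b^2))) := by
        rw [← Real.exp_nat_mul, ← Real.exp_add]


set_option maxHeartbeats 2000000 in
/-- Theorem 4.3, second part: Bennett-based sample-size bound for TBC-I. With
`s ≥ (m - 1)·ln(2/δ) / ((1 + ε)·ln(1 + ε) − ε)` uniform samples, the estimator is an
(ε, δ)-approximation of `C`. -/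
theorem stmt_9 {Ω : Type*} [MeasurableSpace Ω] (μ : Measure Ω) [IsProbabilityMeasure μ]
    (ε δ : ℝ) (hε : ε ∈ Set.Ioo (0 : ℝ) 1) (hδ : δ ∈ Set.Ioo (0 : ℝ) 1)
    {E : Type*} [Fintype E] [MeasurableSpace E] [MeasurableSingletonClass E]
    (m : ℕ) (hm : m = Fintype.card E) (hm2 : 2 ≤ m)
    (a : E → ℝ) (ha : ∀ e, 0 ≤ a e)
    (C : ℝ) (hC : C = ∑ e, a e) (hCpos : 0 < C)
    (s : ℕ) (hs : 1 ≤ s)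
    (hslb : ((m : ℝ) - 1) * Real.log (2 / δ) / ((1 + ε) * Real.log (1 + ε) - ε) ≤ (s : ℝ))
    (Y : Fin s → Ω → E) (hmeas : ∀ j, Measurable (Y j))
    (hunif : ∀ j e, μ {ω | Y j ω = e} = (m : ENNReal)⁻¹)
    (hindep : iIndepFun Y μ) :
    μ {ω | ε * C ≤ |(1 / (s : ℝ)) * (∑ j, (m : ℝ) * a (Y j ω)) - C|}
      ≤ ENNReal.ofReal δ := by
  obtain ⟨hε0, hε1⟩ := hε
  obtain ⟨hδ0, hδ1⟩ := hδ
  have hm1 : (1:ℝ) ≤ (m:ℝ) - 1 := by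
    have : (2:ℝ) ≤ (m:ℝ) := by exact_mod_cast hm2
    linarith
  have hmpos : 0 < m := by omega
  have hsR : (0:ℝ) < s := by exact_mod_cast hs
  set b : ℝ := ((m:ℝ) - 1) * C with hbdef
  have hb : 0 < b := by positivity
  set v : ℝ := ((m:ℝ) - 1) * C^2 with hvdef
  have hv : 0 ≤ v := by positivity
  have haC : ∀ e, a e ≤ C := by
    intro e
    rw [hC]
    exact Finset.single_le_sum (fun e _ => ha e) (Finset.mem_univ e)
  -- log facts
  have h1ε : (1:ℝ) < 1 + ε := by linarith
  have hlog : 0 < Real.log (1 + ε) := Real.log_pos h1ε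
  set hq : ℝ := (1 + ε) * Real.log (1 + ε) - ε with hhdef
  have hh : 0 < hq := by
    have hne : (1+ε)⁻¹ ≠ 1 := by
      intro hcontra
      have : (1:ℝ) + ε = 1 := by
        field_simp at hcontra; linarith
      linarith
    have := Real.log_lt_sub_one_of_pos (x := (1+ε)⁻¹) (by positivity) hne
    rw [Real.log_inv] at this
    have h2 : ε / (1 + ε) < Real.log (1 + ε) := by
      have : 1 - (1+ε)⁻¹ < Real.log (1+ε) := by linarith
      have he : 1 - (1+ε)⁻¹ = ε / (1+ε) := by field_simp; ring
      linarith [he ▸ this]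
    rw [hhdef]
    have := (div_lt_iff₀ (by linarith : (0:ℝ) < 1 + ε)).mp h2
    linarith
  have hlog2δ : 0 < Real.log (2/δ) := Real.log_pos (by rw [lt_div_iff₀ hδ0]; linarith)
  -- choose t
  set t : ℝ := Real.log (1 + ε) / b with htdef
  have ht : 0 ≤ t := by positivity
  have htb : t * b = Real.log (1 + ε) := div_mul_cancel₀ _ hb.ne'
  have hexp_tb : Real.exp (t * b) = 1 + ε := by rw [htb, Real.exp_log (by linarith)]
  -- the exponent value
  set A : ℝ := (s:ℝ) * (ε * C) with hAdef
  have hexpval : -t*A + (s:ℝ)*(v*((Real.exp (t*b)-t*b-1)/b^2)) = -((s:ℝ)*hq/((m:ℝ)-1)) := by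
    rw [hexp_tb, htb, hAdef, hvdef, hbdef, hhdef, htdef, hbdef]
    have hm1ne : ((m:ℝ) - 1) ≠ 0 := by linarith
    field_simp
    ring
  have hexple : Real.exp (-((s:ℝ)*hq/((m:ℝ)-1))) ≤ δ/2 := by
    have hs_h : ((m:ℝ) - 1) * Real.log (2/δ) ≤ (s:ℝ) * hq := by
      have := (div_le_iff₀ hh).mp hslb
      linarith
    have : Real.log (2/δ) ≤ (s:ℝ)*hq/((m:ℝ)-1) := by
      rw [le_div_iff₀ (by linarith : (0:ℝ) < (m:ℝ)-1)]
      linarith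
    calc Real.exp (-((s:ℝ)*hq/((m:ℝ)-1))) ≤ Real.exp (-(Real.log (2/δ))) := by
          rw [Real.exp_le_exp]; linarith
      _ = δ/2 := by
          rw [Real.exp_neg, Real.exp_log (by positivity)]
          rw [inv_div]
  -- the two tail events
  set g₁ : E → ℝ := fun e => (m:ℝ) * a e - C with hg₁def
  set g₂ : E → ℝ := fun e => C - (m:ℝ) * a e with hg₂def
  have hsumC : ∑ _e : E, C = (m:ℝ) * C := by
    rw [Finset.sum_const, Finset.card_univ, ← hm, nsmul_eq_mul]
  have hsuma : ∑ e, (m:ℝ) * a e = (m:ℝ) * C := by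
    rw [← Finset.mul_sum, ← hC]
  have hg₁0 : ∑ e, g₁ e = 0 := by
    simp only [hg₁def, Finset.sum_sub_distrib, hsumC, hsuma, sub_self]
  have hg₂0 : ∑ e, g₂ e = 0 := by
    simp only [hg₂def, Finset.sum_sub_distrib, hsumC, hsuma, sub_self]
  have hg₁b : ∀ e, g₁ e ≤ b := by
    intro e
    simp only [hg₁def, hbdef]
    have := haC e
    have hmR : (0:ℝ) ≤ (m:ℝ) := by positivity
    nlinarith
  have hg₂b : ∀ e, g₂ e ≤ b := by
    intro e
    simp only [hg₂def, hbdef]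
    have h1 := ha e
    have hmR : (0:ℝ) ≤ (m:ℝ) := by positivity
    nlinarith [mul_nonneg hmR h1]
  have hEa2 : ∑ e, (a e)^2 ≤ C^2 := by
    calc ∑ e, (a e)^2 ≤ ∑ e, a e * C :=
          Finset.sum_le_sum fun e _ => by nlinarith [ha e, haC e]
      _ = C^2 := by rw [← Finset.sum_mul, ← hC]; ring
  have hsumC2 : ∑ _e : E, C^2 = (m:ℝ) * C^2 := by
    rw [Finset.sum_const, Finset.card_univ, ← hm, nsmul_eq_mul]
  have hsq : ∑ e, ((m:ℝ) * a e - C)^2 ≤ (m:ℝ) * v := by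
    have hexpand : ∑ e, ((m:ℝ) * a e - C)^2 =
        (m:ℝ)^2 * (∑ e, (a e)^2) - (m:ℝ)*C^2 := by
      have hterm : ∀ e : E, ((m:ℝ) * a e - C)^2 =
          (m:ℝ)^2 * (a e)^2 - 2*(m:ℝ)*C * a e + C^2 := fun e => by ring
      rw [Finset.sum_congr rfl (fun e _ => hterm e), Finset.sum_add_distrib,
        Finset.sum_sub_distrib, ← Finset.mul_sum, ← Finset.mul_sum, ← hC, hsumC2]
      ring
    rw [hexpand, hvdef]
    nlinarith [mul_le_mul_of_nonneg_left hEa2 (sq_nonneg (m:ℝ)), hCpos, hm1]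
  have hsq₁ : ∑ e, (g₁ e)^2 ≤ (m:ℝ) * v := hsq
  have hsq₂ : ∑ e, (g₂ e)^2 ≤ (m:ℝ) * v := by
    have : ∀ e : E, (g₂ e)^2 = (g₁ e)^2 := by
      intro e; simp only [hg₁def, hg₂def]; ring
    rw [Finset.sum_congr rfl (fun e _ => this e)]
    exact hsq
  -- tail bounds
  have htail : ∀ (g : E → ℝ), (∀ e, g e ≤ b) → (∑ e, g e = 0) →
      (∑ e, (g e)^2 ≤ (m:ℝ) * v) →
      μ {ω | A ≤ ∑ j, g (Y j ω)} ≤ ENNReal.ofReal (δ/2) := by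
    intro g hgb hg0 hg2
    have h1 := tail_bound μ m hm hmpos s Y hmeas hunif hindep g b hb hgb hg0 v hg2 hv t ht A
    rw [hexpval] at h1
    have h2 : (μ {ω | A ≤ ∑ j, g (Y j ω)}).toReal ≤ δ/2 := h1.trans hexple
    exact (ENNReal.le_ofReal_iff_toReal_le (MeasureTheory.measure_ne_top μ _)
      (by positivity)).mpr h2
  have hB₁ := htail g₁ hg₁b hg₁0 hsq₁
  have hB₂ := htail g₂ hg₂b hg₂0 hsq₂
  -- union bound
  have hsub : {ω | ε * C ≤ |(1 / (s:ℝ)) * (∑ j, (m:ℝ) * a (Y j ω)) - C|} ⊆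
      {ω | A ≤ ∑ j, g₁ (Y j ω)} ∪ {ω | A ≤ ∑ j, g₂ (Y j ω)} := by
    intro ω hω
    simp only [Set.mem_setOf_eq, Set.mem_union] at hω ⊢
    have hu : ∑ j, g₁ (Y j ω) = (∑ j, (m:ℝ) * a (Y j ω)) - (s:ℝ) * C := by
      simp only [hg₁def, Finset.sum_sub_distrib, Finset.sum_const, Finset.card_univ,
        Fintype.card_fin, nsmul_eq_mul]
    have key : (1/(s:ℝ)) * (∑ j, (m:ℝ) * a (Y j ω)) - C
        = (1/(s:ℝ)) * (∑ j, g₁ (Y j ω)) := by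
      rw [hu]
      field_simp
    rw [key, abs_mul, abs_of_pos (by positivity : (0:ℝ) < 1/(s:ℝ))] at hω
    have hA : A ≤ |∑ j, g₁ (Y j ω)| := by
      rw [hAdef]
      have h3 := mul_le_mul_of_nonneg_left hω hsR.le
      have h4 : (s:ℝ) * (1/(s:ℝ) * |∑ j, g₁ (Y j ω)|) = |∑ j, g₁ (Y j ω)| := by
        field_simp
      linarith [h3, h4]
    rcases le_abs.mp hA with h1 | h2
    · left; exact h1
    · right
      have hneg : ∑ j, g₂ (Y j ω) = -(∑ j, g₁ (Y j ω)) := by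
        simp only [hg₂def, hg₁def, ← Finset.sum_neg_distrib, neg_sub]
      rw [hneg]; exact h2
  calc μ {ω | ε * C ≤ |(1 / (s:ℝ)) * (∑ j, (m:ℝ) * a (Y j ω)) - C|}
      ≤ μ ({ω | A ≤ ∑ j, g₁ (Y j ω)} ∪ {ω | A ≤ ∑ j, g₂ (Y j ω)}) :=
        MeasureTheory.measure_mono hsub
    _ ≤ μ {ω | A ≤ ∑ j, g₁ (Y j ω)} + μ {ω | A ≤ ∑ j, g₂ (Y j ω)} :=
        MeasureTheory.measure_union_le _ _
    _ ≤ ENNReal.ofReal (δ/2) + ENNReal.ofReal (δ/2) := add_le_add hB₁ hB₂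
    _ = ENNReal.ofReal δ := by
        rw [← ENNReal.ofReal_add (by positivity) (by positivity)]
        norm_num
end
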